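/- Let p, f ∈ ℤ[A₁,...,Aₙ] with p irreducible over ℚ and primitive (the gcd of its coefficients is 1), let σ = A₁ + ⋯ + Aₙ, and suppose p divides 2f − σᵉ in ℤ[A₁,...,Aₙ]. Then the reduction of p modulo 2 equals σ^d mod 2, where d = deg p. -/

import Mathlib

open MvPolynomial

private lemma mv_isUnit_eq_C {F : Type*} [Field F] :
    ∀ {N : ℕ} {q : MvPolynomial (Fin N) F}, IsUnit q → ∃ c : F, q = C c := by
  intro N
  induction N with
  | zero =>
    intro q _
    exact ⟨q.coeff 0, eq_C_of_isEmpty q⟩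
  | succ m ih =>
    intro q hq
    have h1 : IsUnit (finSuccEquiv F m q) := hq.map _
    obtain ⟨r, hr, hCr⟩ := Polynomial.isUnit_iff.mp h1
    obtain ⟨c, rfl⟩ := ih hr
    refine ⟨c, ?_⟩
    have h3 := RingHom.congr_fun (finSuccEquiv_comp_C_eq_C (R := F) m) c
    simp only [RingHom.coe_comp, RingHom.coe_coe, Function.comp_apply] at h3
    calc q = (finSuccEquiv F m).symm (finSuccEquiv F m q) :=
            ((finSuccEquiv F m).symm_apply_apply q).symm
      _ = (finSuccEquiv F m).symm (Polynomial.C (C c)) := by rw [← hCr]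
      _ = C c := h3

private lemma prime_sigma {m : ℕ} :
    Prime (∑ i : Fin (m + 1), X i : MvPolynomial (Fin (m + 1)) (ZMod 2)) := by
  set σZ : MvPolynomial (Fin (m + 1)) (ZMod 2) := ∑ i : Fin (m + 1), X i with hσZ
  -- the involution sending X 0 to σZ
  let g : Fin (m + 1) → MvPolynomial (Fin (m + 1)) (ZMod 2) :=
    fun i => if i = 0 then σZ else X i
  let φ : MvPolynomial (Fin (m + 1)) (ZMod 2) →ₐ[ZMod 2] MvPolynomial (Fin (m + 1)) (ZMod 2) :=
    aeval g
  have h2 : (2 : MvPolynomial (Fin (m + 1)) (ZMod 2)) = 0 := by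
    rw [← map_ofNat (C : ZMod 2 →+* MvPolynomial (Fin (m + 1)) (ZMod 2)) 2,
      show (2 : ZMod 2) = 0 by decide, map_zero]
  have hX : ∀ i : Fin (m + 1), φ (X i) = g i := fun i => aeval_X g i
  have hφσ : φ σZ = X 0 := by
    have hsum : φ σZ = ∑ i : Fin (m + 1), φ (X i) := by rw [hσZ, map_sum]
    rw [hsum]
    rw [Finset.sum_congr rfl fun i _ => hX i]
    rw [show (∑ i : Fin (m + 1), g i)
        = σZ + ∑ i ∈ Finset.univ.erase 0, X i by
      rw [← Finset.add_sum_erase _ g (Finset.mem_univ 0)]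
      simp only [g, if_pos rfl]
      congr 1
      exact Finset.sum_congr rfl fun i hi => if_neg (Finset.ne_of_mem_erase hi)]
    have : σZ = X 0 + ∑ i ∈ Finset.univ.erase 0, X i := by
      rw [hσZ, ← Finset.add_sum_erase _ X (Finset.mem_univ 0)]
    rw [this, add_assoc, ← two_mul, h2, zero_mul, add_zero]
  have hφφ : ∀ q, φ (φ q) = q := by
    have : φ.comp φ = AlgHom.id (ZMod 2) (MvPolynomial (Fin (m + 1)) (ZMod 2)) := by
      apply algHom_ext
      intro i
      simp only [AlgHom.comp_apply, AlgHom.id_apply]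
      rcases eq_or_ne i 0 with rfl | hi
      · rw [hX 0, show g 0 = σZ from if_pos rfl, hφσ]
      · rw [hX i, show g i = X i from if_neg hi, hX i, show g i = X i from if_neg hi]
    intro q
    exact congrArg (fun h : _ →ₐ[ZMod 2] _ => h q) this
  let E : MvPolynomial (Fin (m + 1)) (ZMod 2) ≃ₐ[ZMod 2] MvPolynomial (Fin (m + 1)) (ZMod 2) :=
    AlgEquiv.ofAlgHom φ φ (AlgHom.ext hφφ) (AlgHom.ext hφφ)
  have hprimeX : Prime (X 0 : MvPolynomial (Fin (m + 1)) (ZMod 2)) := by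
    rw [← MulEquiv.prime_iff (finSuccEquiv (ZMod 2) m).toMulEquiv]
    have : (finSuccEquiv (ZMod 2) m).toMulEquiv (X 0) = Polynomial.X :=
      finSuccEquiv_X_zero
    rw [this]
    exact Polynomial.prime_X
  have hEX : σZ = E (X 0) := by
    have h1 : E (X 0) = φ (X 0) := rfl
    rw [h1, hX 0]
    exact (if_pos rfl).symm
  rw [hEX]
  exact (MulEquiv.prime_iff E.toMulEquiv).mpr hprimeX

/-- Mod 2 theorem: if `p` is homogeneous of degree `d`, irreducible over `ℚ`,
primitive over `ℤ`, and divides `2f - σᵉ` where `σ` is the sum of the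
variables, then `p ≡ σ^d (mod 2)`. -/
theorem stmt_8 {n : ℕ} (p f : MvPolynomial (Fin n) ℤ) (d e : ℕ)
    (hp : p.IsHomogeneous d)
    (hirr : Irreducible (MvPolynomial.map (Int.castRingHom ℚ) p))
    (hprim : ∀ c : ℤ, (∀ m, c ∣ MvPolynomial.coeff m p) → IsUnit c)
    (hdvd : p ∣ (2 * f - (∑ i : Fin n, X i) ^ e)) :
    MvPolynomial.map (Int.castRingHom (ZMod 2)) p
      = (∑ i : Fin n, X i) ^ d := by
  cases n with
  | zero =>
    exfalso
    set P := MvPolynomial.map (Int.castRingHom ℚ) p with hP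
    have hC : P = C (P.coeff 0) := eq_C_of_isEmpty P
    rcases eq_or_ne (P.coeff 0) 0 with h0 | h0
    · rw [h0, map_zero] at hC
      exact not_irreducible_zero (hC ▸ hirr)
    · exact hirr.not_isUnit (hC ▸ (IsUnit.map C (isUnit_iff_ne_zero.mpr h0)))
  | succ m =>
    set σZ : MvPolynomial (Fin (m + 1)) (ZMod 2) := ∑ i : Fin (m + 1), X i with hσZ
    set pbar := MvPolynomial.map (Int.castRingHom (ZMod 2)) p with hpbar
    have h2 : (2 : MvPolynomial (Fin (m + 1)) (ZMod 2)) = 0 := by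
      rw [show (2 : MvPolynomial (Fin (m + 1)) (ZMod 2)) = C (2 : ZMod 2) by rw [map_ofNat],
        show (2 : ZMod 2) = 0 by decide, map_zero]
    have hpbar_ne : pbar ≠ 0 := by
      intro h
      have : ∀ mm, (2 : ℤ) ∣ MvPolynomial.coeff mm p := by
        intro mm
        have hc : pbar.coeff mm = 0 := by rw [h]; simp
        rw [hpbar, coeff_map] at hc
        exact (ZMod.intCast_zmod_eq_zero_iff_dvd _ 2).mp hc
      rcases Int.isUnit_iff.mp (hprim 2 this) with h | h <;> omega
    have hdvd2 : pbar ∣ σZ ^ e := by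
      have := map_dvd (MvPolynomial.map (Int.castRingHom (ZMod 2))) hdvd
      rw [map_sub, map_mul, map_pow, map_sum] at this
      simp only [map_X, map_ofNat] at this
      rw [h2, zero_mul, zero_sub, ← hσZ] at this
      exact (dvd_neg.mp this)
    obtain ⟨k, hk, u, hu⟩ := (dvd_prime_pow prime_sigma e).mp hdvd2
    obtain ⟨c, hc⟩ := mv_isUnit_eq_C u.isUnit
    have hcne : c ≠ 0 := by
      intro h0
      apply u.ne_zero
      rw [hc, h0, map_zero]
    have hc1 : c = 1 := by
      have hall : ∀ x : ZMod 2, x ≠ 0 → x = 1 := by decide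
      exact hall c hcne
    have hpeq : pbar = σZ ^ k := by
      have : pbar * (u : MvPolynomial (Fin (m + 1)) (ZMod 2)) = σZ ^ k := hu
      rw [hc, hc1, map_one, mul_one] at this
      exact this
    have hhom : pbar.IsHomogeneous d := hp.map _
    have hhom2 : pbar.IsHomogeneous k := by
      rw [hpeq]
      simpa using (MvPolynomial.IsHomogeneous.sum Finset.univ X 1
        (fun i _ => isHomogeneous_X _ i)).pow k
    have hdk : d = k := hhom.inj_right hhom2 hpbar_ne
    rw [hdk]
    exact hpeq
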